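/- arXiv:1808.02076 — 6 statements merged into one kernel-verified Lean document; each statement's English description precedes it below -/
import Mathlib

section
/- For every integer k > 0 and every rational number q with 0 ≤ q ≤ 2k-1, there exists a weighted k-majority tournament T and a dominating set D of T such that W(T,D) = q. -/
open scoped Classical
open Finset

noncomputable section

/-- The weight of the pair (u,v): number of the 2k-1 linear orders in which u > v. -/
def weightFn {V : Type} [Fintype V] (k : ℕ) (π : Fin (2*k-1) → LinearOrder V) (u v : V) : ℕ :=
  (Finset.univ.filter (fun i => (π i).lt v u)).card

/-- u → v is an edge of the k-majority tournament iff u > v in at least k of the orders. -/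
def isEdge {V : Type} [Fintype V] (k : ℕ) (π : Fin (2*k-1) → LinearOrder V) (u v : V) : Prop :=
  k ≤ weightFn k π u v

/-- D is a dominating set: every vertex not in D is dominated by some vertex of D. -/
def IsDomSet {V : Type} [Fintype V] (k : ℕ) (π : Fin (2*k-1) → LinearOrder V) (D : Finset V) : Prop :=
  ∀ v, v ∉ D → ∃ u ∈ D, isEdge k π u v

/-- Average inweight of v with respect to D. -/
def avgInweight {V : Type} [Fintype V] (k : ℕ) (π : Fin (2*k-1) → LinearOrder V)
    (D : Finset V) (v : V) : ℚ :=
  (∑ u ∈ D.filter (fun u => isEdge k π u v), (weightFn k π u v : ℚ)) / D.card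

/-- The weight (approval gap) W(T,D) of a set D. -/
def Wgap {V : Type} [Fintype V] (k : ℕ) (π : Fin (2*k-1) → LinearOrder V) (D : Finset V) : ℚ :=
  if h : D = Finset.univ then 0
  else (Finset.univ \ D).inf'
    (Finset.sdiff_nonempty.mpr (fun hs => h (Finset.univ_subset_iff.mp hs)))
    (fun v => avgInweight k π D v)

/-- The maximum approval gap γ_w(T). -/
def gammaW {V : Type} [Fintype V] (k : ℕ) (π : Fin (2*k-1) → LinearOrder V) : ℚ :=
  (Finset.univ.filter (fun D : Finset V => IsDomSet k π D)).sup'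
    ⟨Finset.univ, Finset.mem_filter.mpr
      ⟨Finset.mem_univ _, fun v hv => absurd (Finset.mem_univ v) hv⟩⟩
    (fun D => Wgap k π D)

/-- Edge relation of the clockwise tournament CW(n); vertex v_{i+1} is index i (0-based). -/
def cwEdge (n : ℕ) (i j : Fin n) : Prop :=
  ∃ m : ℕ, 1 ≤ m ∧
    (if n % 2 = 1 then m ≤ (n-1)/2
     else if i.val < n/2 then m ≤ n/2 else m ≤ n/2 - 1) ∧
    j.val = (i.val + m) % n

end

theorem sum_filter_val_lt' {n c : ℕ} {M : Type*} [AddCommMonoid M] (h : c ≤ n) (f : ℕ → M) :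
    ∑ u ∈ (univ : Finset (Fin n)).filter (fun u => u.val < c), f u.val = ∑ j ∈ range c, f j := by
  apply Finset.sum_bij' (fun (u : Fin n) _ => u.val)
    (fun j hj => (⟨j, lt_of_lt_of_le (Finset.mem_range.mp hj) h⟩ : Fin n)) <;>
    intro a ha <;> simp_all <;> simp_all

theorem card_filter_val_lt' {n c : ℕ} (h : c ≤ n) :
    ((univ : Finset (Fin n)).filter (fun u => u.val < c)).card = c := by
  rw [Finset.card_eq_sum_ones]
  simpa using sum_filter_val_lt' h (fun _ => (1:ℕ))

theorem main_constr (k d s : ℕ) (hk : 0 < k) (w : ℕ → ℕ) (hs : 0 < s) (hsd : s ≤ d)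
    (hw1 : ∀ j, j < s → k ≤ w j) (hw2 : ∀ j, j < s → w j ≤ 2*k-1)
    (hw0 : ∀ j, s ≤ j → w j = 0) :
    ∃ (π : Fin (2*k-1) → LinearOrder (Fin (d+1))) (D : Finset (Fin (d+1))),
      IsDomSet k π D ∧ Wgap k π D = (∑ j ∈ range s, (w j : ℚ)) / d := by
  have hd : 0 < d := lt_of_lt_of_le hs hsd
  set g : Fin (2*k-1) → Fin (d+1) → ℕ := fun t x =>
    if x.val = d then d else if t.val < w x.val then x.val + d + 1 else x.val with hgdef
  have hg : ∀ t, Function.Injective (g t) := by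
    intro t x y hxy
    have hx := x.isLt; have hy := y.isLt
    refine Fin.ext ?_
    simp only [hgdef] at hxy
    split_ifs at hxy <;> omega
  set π : Fin (2*k-1) → LinearOrder (Fin (d+1)) := fun t => LinearOrder.lift' (g t) (hg t) with hπdef
  set v : Fin (d+1) := Fin.last d with hvdef
  set D : Finset (Fin (d+1)) := univ.filter (fun x => x.val < d) with hDdef
  have hlt : ∀ t x y, (π t).lt x y ↔ g t x < g t y := fun _ _ _ => Iff.rfl
  have hwle : ∀ j, w j ≤ 2*k-1 := by
    intro j
    rcases lt_or_ge j s with h | h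
    · exact hw2 j h
    · rw [hw0 j h]; omega
  have hweight : ∀ u : Fin (d+1), u.val < d → weightFn k π u v = w u.val := by
    intro u hu
    rw [weightFn]
    have hfe : (univ.filter (fun t : Fin (2*k-1) => (π t).lt v u))
        = univ.filter (fun t => t.val < w u.val) := by
      apply Finset.filter_congr
      intro t _
      rw [hlt]
      have hgv : g t v = d := by simp [hgdef, hvdef]
      have hgu : g t u = if t.val < w u.val then u.val + d + 1 else u.val := by
        rw [hgdef]; exact if_neg (Nat.ne_of_lt hu)
      rw [hgv, hgu]
      split_ifs with h
      · simp only [h, iff_true]; omega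
      · simp only [h, iff_false]; omega
    rw [hfe, card_filter_val_lt' (hwle u.val)]
  have hvD : v ∉ D := by simp [hDdef, hvdef]
  have hmemD : ∀ x : Fin (d+1), x ∈ D ↔ x.val < d := by intro x; simp [hDdef]
  refine ⟨π, D, ?_, ?_⟩
  · -- dominating set
    intro x hx
    have hxv : x = v := by
      refine Fin.ext ?_
      have := x.isLt
      rw [hmemD] at hx
      simp only [hvdef, Fin.val_last]
      omega
    subst hxv
    refine ⟨⟨0, by omega⟩, ?_, ?_⟩
    · rw [hmemD]; exact hd
    · rw [isEdge, hweight _ hd]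
      exact hw1 0 hs
  · -- Wgap value
    have hDne : D ≠ univ := fun h => hvD (h ▸ mem_univ v)
    have hsdiff : univ \ D = {v} := by
      ext x
      have hxx := x.isLt
      simp [hDdef, hvdef, Fin.ext_iff]
      omega
    rw [Wgap, dif_neg hDne]
    have havg : avgInweight k π D v = (∑ j ∈ range s, (w j : ℚ)) / d := by
      rw [avgInweight]
      have hcard : D.card = d := by rw [hDdef]; exact card_filter_val_lt' (Nat.le_succ d)
      have hfilter : D.filter (fun u => isEdge k π u v) = univ.filter (fun u : Fin (d+1) => u.val < s) := by
        ext u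
        rw [Finset.mem_filter, hmemD, Finset.mem_filter]
        simp only [Finset.mem_univ, true_and]
        constructor
        · rintro ⟨hud, he⟩
          rw [isEdge, hweight u hud] at he
          by_contra hc
          rw [hw0 u.val (by omega)] at he
          omega
        · intro hus
          have hud : u.val < d := lt_of_lt_of_le hus hsd
          refine ⟨hud, ?_⟩
          rw [isEdge, hweight u hud]
          exact hw1 u.val hus
      rw [hfilter, hcard]
      congr 1
      have hsum : ∀ u ∈ univ.filter (fun u : Fin (d+1) => u.val < s),
          ((weightFn k π u v : ℚ)) = (fun j => ((w j : ℚ))) u.val := by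
        intro u hu
        rw [Finset.mem_filter] at hu
        rw [hweight u (lt_of_lt_of_le hu.2 hsd)]
      rw [Finset.sum_congr rfl hsum]
      exact sum_filter_val_lt' (n := d+1) (c := s) (M := ℚ) (by omega) (fun j => (w j : ℚ))
    apply le_antisymm
    · refine (Finset.inf'_le _ ?_).trans (le_of_eq havg)
      simp only [Finset.mem_sdiff]
      exact ⟨mem_univ v, hvD⟩
    · apply Finset.le_inf'
      intro b hb
      simp only [Finset.mem_sdiff, hmemD] at hb
      have hbv : b = v := by
        refine Fin.ext ?_
        have := b.isLt
        simp only [hvdef, Fin.val_last]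
        omega
      subst hbv
      exact le_of_eq havg.symm

theorem tele_min (f : ℕ → ℕ) (hf : Monotone f) (n : ℕ) :
    ∑ j ∈ range n, (f (j+1) - f j) = f n - f 0 := by
  induction n with
  | zero => simp
  | succ n ih =>
    rw [Finset.sum_range_succ, ih]
    have h1 : f 0 ≤ f n := hf (Nat.zero_le n)
    have h2 : f n ≤ f (n+1) := hf (by omega)
    omega

theorem arith_pack (k S : ℕ) (hk : 0 < k) (hS1 : k ≤ S) :
    ∃ s, 0 < s ∧ s * k ≤ S ∧ S ≤ s * (2*k-1) ∧ ∀ d, S ≤ d * (2*k-1) → s ≤ d := by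
  set s := (S + (2*k-1) - 1) / (2*k-1) with hsdef
  have hcpos : 0 < 2*k-1 := by omega
  have h9 : (2*k-1) * s + (S + (2*k-1) - 1) % (2*k-1) = S + (2*k-1) - 1 := by
    rw [hsdef]; exact Nat.div_add_mod _ _
  have h10 : (S + (2*k-1) - 1) % (2*k-1) < 2*k-1 := Nat.mod_lt _ hcpos
  have hup : s * (2*k-1) ≤ S + (2*k-1) - 1 := by
    rw [mul_comm]; omega
  have hlow : S ≤ s * (2*k-1) := by
    rw [mul_comm]
    generalize hA : (2*k-1) * s = A at h9 ⊢
    omega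
  have hspos : 0 < s := by
    rw [hsdef]
    exact Nat.div_pos (by omega) hcpos
  have hid : s * (2*k-1) = s*k + s*(k-1) := by
    cases k with
    | zero => omega
    | succ k' =>
      have e1 : 2*(k'+1)-1 = 2*k'+1 := by omega
      have e2 : (k'+1)-1 = k' := by omega
      rw [e1, e2]; ring
  refine ⟨s, hspos, ?_, hlow, ?_⟩
  · rcases Nat.lt_or_ge s 2 with h | h
    · have hs1 : s = 1 := by omega
      rw [hs1, one_mul]; exact hS1
    · have h2k1 : 2*(k-1) ≤ s*(k-1) := Nat.mul_le_mul_right _ h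
      have h3 : s*k + s*(k-1) ≤ S + (2*k-1) - 1 := hid ▸ hup
      generalize hA : s*k = A at h3 ⊢
      generalize hB : s*(k-1) = B at h3 h2k1
      omega
  · intro d hd
    by_contra hcon
    push_neg at hcon
    have h5 : (d+1) * (2*k-1) ≤ s * (2*k-1) := Nat.mul_le_mul_right _ (by omega)
    have h6 : (d+1) * (2*k-1) = d*(2*k-1) + (2*k-1) := by ring
    generalize hP : d*(2*k-1) = P at h5 h6 hd
    generalize hQ : s*(2*k-1) = Q at h5 hup
    omega

theorem wfun_exists (k s r : ℕ) (hk : 0 < k) (hr : r ≤ s*(k-1)) :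
    ∃ w : ℕ → ℕ, (∀ j, j < s → k ≤ w j) ∧ (∀ j, j < s → w j ≤ 2*k-1) ∧
      (∀ j, s ≤ j → w j = 0) ∧ (∑ j ∈ range s, w j = s*k + r) := by
  set f : ℕ → ℕ := fun j => min r (j*(k-1)) with hfdef
  have hfmono : Monotone f := by
    intro i j hij
    exact min_le_min le_rfl (Nat.mul_le_mul_right _ hij)
  refine ⟨fun j => if j < s then k + (f (j+1) - f j) else 0, ?_, ?_, ?_, ?_⟩
  · intro j hj; simp only []; rw [if_pos hj]; exact Nat.le_add_right _ _
  · intro j hj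
    simp only []; rw [if_pos hj]
    have e : (j+1)*(k-1) = j*(k-1)+(k-1) := by ring
    simp only [hfdef, e]
    generalize j*(k-1) = x
    omega
  · intro j hj; simp only []; rw [if_neg (by omega)]
  · have hcg : ∀ j ∈ range s, (if j < s then k + (f (j+1) - f j) else 0) = k + (f (j+1) - f j) := by
      intro j hj; rw [if_pos (Finset.mem_range.mp hj)]
    rw [Finset.sum_congr rfl hcg, Finset.sum_add_distrib, Finset.sum_const, Finset.card_range,
      smul_eq_mul, tele_min f hfmono s]
    have h1 : f s = r := by simp only [hfdef]; exact min_eq_left hr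
    have h2 : f 0 = 0 := by simp [hfdef]
    rw [h1, h2, Nat.sub_zero]

theorem stmt2 (k : ℕ) (hk : 0 < k) (q : ℚ) (hq0 : 0 ≤ q) (hq1 : q ≤ 2*(k:ℚ)-1) :
    ∃ (V : Type) (inst : Fintype V) (π : Fin (2*k-1) → LinearOrder V) (D : Finset V),
      @IsDomSet V inst k π D ∧ @Wgap V inst k π D = q := by
  rcases eq_or_lt_of_le hq0 with h0 | hqpos
  · refine ⟨Fin 1, inferInstance, fun _ => inferInstance, Finset.univ, ?_, ?_⟩
    · intro v hv; exact absurd (Finset.mem_univ v) hv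
    · rw [Wgap, dif_pos rfl]; exact h0
  · set a := q.num.toNat with hadef
    set b := q.den with hbdef
    have hbpos : 0 < b := q.pos
    have hnum : (0:ℤ) < q.num := Rat.num_pos.mpr hqpos
    have hapos : 0 < a := by rw [hadef]; omega
    have haq : (a:ℚ) = (q.num : ℚ) := by
      rw [hadef]
      exact_mod_cast congrArg (fun z : ℤ => (z : ℚ)) (Int.toNat_of_nonneg hnum.le)
    have hqab : q = (a:ℚ)/(b:ℚ) := by
      rw [haq, hbdef]; exact (Rat.num_div_den q).symm
    have h2k : 1 ≤ 2*k := by omega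
    have hb0 : (0:ℚ) < (b:ℚ) := by exact_mod_cast hbpos
    have hcast : ((2*k-1 : ℕ):ℚ) = 2*(k:ℚ)-1 := by
      rw [Nat.cast_sub h2k]; push_cast; ring
    have hab : a ≤ b*(2*k-1) := by
      rw [← Nat.cast_le (α := ℚ), Nat.cast_mul, hcast]
      have haqb : (a:ℚ) = q * b := by
        rw [hqab]; field_simp
      rw [haqb, mul_comm ((b:ℚ)) _]
      exact mul_le_mul_of_nonneg_right hq1 hb0.le
    set S := a*k with hSdef
    set d := b*k with hddef
    have hdpos : 0 < d := Nat.mul_pos hbpos hk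
    have hS1 : k ≤ S := by
      rw [hSdef]; exact Nat.le_mul_of_pos_left k hapos
    have hSd : S ≤ d * (2*k-1) := by
      rw [hSdef, hddef]
      calc a*k ≤ (b*(2*k-1))*k := Nat.mul_le_mul_right k hab
        _ = b*k*(2*k-1) := by ring
    obtain ⟨s, hspos, hsk, hlow, hsd'⟩ := arith_pack k S hk hS1
    have hsd : s ≤ d := hsd' d hSd
    set r := S - s*k with hrdef
    have hid : s * (2*k-1) = s*k + s*(k-1) := by
      cases k with
      | zero => omega
      | succ k' =>
        have e1 : 2*(k'+1)-1 = 2*k'+1 := by omega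
        have e2 : (k'+1)-1 = k' := by omega
        rw [e1, e2]; ring
    have hr : r ≤ s*(k-1) := by
      have h4 : S ≤ s*k + s*(k-1) := hid ▸ hlow
      rw [hrdef]
      generalize hA : s*k = A at h4 ⊢
      generalize hB : s*(k-1) = B at h4 ⊢
      omega
    obtain ⟨w, hw1, hw2, hw0, hsumN⟩ := wfun_exists k s r hk hr
    have hsumS : ∑ j ∈ range s, w j = S := by
      rw [hsumN, hrdef]
      generalize hA : s*k = A at hsk ⊢
      omega
    obtain ⟨π, D, hdom, hgap⟩ := main_constr k d s hk w hspos hsd hw1 hw2 hw0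
    refine ⟨Fin (d+1), inferInstance, π, D, hdom, ?_⟩
    rw [hgap]
    have hsumQ : (∑ j ∈ range s, (w j : ℚ)) = (S:ℚ) := by
      rw [← Nat.cast_sum]
      exact_mod_cast congrArg (fun n : ℕ => (n:ℚ)) hsumS
    rw [hsumQ, hqab, hSdef, hddef]
    push_cast
    rw [mul_div_mul_right _ _ (show (k:ℚ) ≠ 0 by exact_mod_cast hk.ne')]
end

section
/- For any weighted k-majority tournament T on at least 2 vertices, the maximum approval gap satisfies γ_w(T) ≥ k/2. -/
open scoped Classical
open Finset

section Aux

variable {V : Type} [Fintype V] (k : ℕ) (π : Fin (2*k-1) → LinearOrder V)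

lemma weight_add {u v : V} (h : u ≠ v) :
    weightFn k π u v + weightFn k π v u = 2*k-1 := by
  unfold weightFn
  have h1 := Finset.card_filter_add_card_filter_not
    (s := (Finset.univ : Finset (Fin (2*k-1)))) (p := fun i => (π i).lt v u)
  have h2 : Finset.univ.filter (fun i => ¬ (π i).lt v u)
      = Finset.univ.filter (fun i => (π i).lt u v) := by
    apply Finset.filter_congr
    intro i _
    letI := π i
    constructor
    · intro hnlt
      exact lt_of_le_of_ne (not_lt.mp hnlt) h
    · intro hlt
      exact not_lt.mpr hlt.le
  rw [h2, Finset.card_univ, Fintype.card_fin] at h1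
  exact h1

lemma weightFn_self (v : V) : weightFn k π v v = 0 := by
  unfold weightFn
  simp only [Finset.card_eq_zero, Finset.filter_eq_empty_iff]
  intro i _
  letI := π i
  exact lt_irrefl v

lemma not_isEdge_self (hk : 0 < k) (v : V) : ¬ isEdge k π v v := by
  unfold isEdge
  rw [weightFn_self]
  omega

/-- the directed contribution -/
noncomputable def gg (u v : V) : ℕ := if isEdge k π u v then weightFn k π u v else 0

lemma gg_pair (hk : 0 < k) {u v : V} (h : u ≠ v) : k ≤ gg k π u v + gg k π v u := by
  have hsum := weight_add k π h
  unfold gg isEdge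
  split_ifs <;> omega

noncomputable def inW (v : V) : ℕ := ∑ u ∈ Finset.univ.filter (fun u => isEdge k π u v), weightFn k π u v

lemma inW_eq (v : V) : inW k π v = ∑ u, gg k π u v := by
  unfold inW gg
  rw [Finset.sum_filter]

lemma exists_big (hk : 0 < k) (hV : 2 ≤ Fintype.card V) :
    ∃ v : V, k * (Fintype.card V - 1) ≤ 2 * inW k π v := by
  have hne : (Finset.univ : Finset V).Nonempty := by
    rw [← Finset.card_pos, Finset.card_univ]; omega
  have key : ∀ v : V, k * (Fintype.card V - 1) ≤ ∑ u, (gg k π u v + gg k π v u) := by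
    intro v
    calc k * (Fintype.card V - 1) = ∑ _u ∈ Finset.univ.erase v, k := by
          rw [Finset.sum_const, Finset.card_erase_of_mem (Finset.mem_univ v),
            Finset.card_univ, smul_eq_mul, Nat.mul_comm]
      _ ≤ ∑ u ∈ Finset.univ.erase v, (gg k π u v + gg k π v u) := by
          apply Finset.sum_le_sum
          intro u hu
          exact gg_pair k π hk (Finset.ne_of_mem_erase hu)
      _ ≤ ∑ u, (gg k π u v + gg k π v u) := by
          apply Finset.sum_le_sum_of_subset (Finset.erase_subset _ _)
  have hsum : ∑ _v : V, k * (Fintype.card V - 1) ≤ ∑ v : V, 2 * inW k π v := by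
    calc ∑ _v : V, k * (Fintype.card V - 1) ≤ ∑ v : V, ∑ u, (gg k π u v + gg k π v u) :=
          Finset.sum_le_sum (fun v _ => key v)
      _ = (∑ v : V, ∑ u, gg k π u v) + ∑ v : V, ∑ u, gg k π v u := by
          rw [← Finset.sum_add_distrib]
          exact Finset.sum_congr rfl (fun v _ => Finset.sum_add_distrib)
      _ = ∑ v : V, 2 * inW k π v := by
          rw [Finset.sum_comm (f := fun v u => gg k π v u)]
          simp only [inW_eq, two_mul, Finset.sum_add_distrib]
  obtain ⟨v, _, hv⟩ := Finset.exists_le_of_sum_le hne hsum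
  exact ⟨v, hv⟩

end Aux

theorem stmt5 {V : Type} [Fintype V] (k : ℕ) (hk : 0 < k) (hV : 2 ≤ Fintype.card V)
    (π : Fin (2*k-1) → LinearOrder V) :
    (k:ℚ)/2 ≤ gammaW k π := by
  obtain ⟨v, hv⟩ := exists_big k π hk hV
  set n := Fintype.card V with hn
  set D : Finset V := Finset.univ.erase v with hD
  have hvD : v ∉ D := Finset.notMem_erase v _
  have hDne : D ≠ Finset.univ := fun h => hvD (h ▸ Finset.mem_univ v)
  have hpos : 0 < inW k π v := by
    have h1 : 0 < k * (n - 1) := Nat.mul_pos hk (by omega)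
    omega
  have hdom : IsDomSet k π D := by
    intro w hw
    have hwv : w = v := by
      by_contra h
      exact hw (Finset.mem_erase.mpr ⟨h, Finset.mem_univ w⟩)
    subst hwv
    have hne : (Finset.univ.filter (fun u => isEdge k π u w)).Nonempty := by
      by_contra h
      rw [Finset.not_nonempty_iff_eq_empty] at h
      unfold inW at hpos
      rw [h, Finset.sum_empty] at hpos
      exact lt_irrefl _ hpos
    obtain ⟨u, hu⟩ := hne
    have hue := (Finset.mem_filter.mp hu).2
    have hune : u ≠ w := fun h => not_isEdge_self k π hk w (h ▸ hue)
    exact ⟨u, Finset.mem_erase.mpr ⟨hune, Finset.mem_univ u⟩, hue⟩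
  have hfil : D.filter (fun u => isEdge k π u v)
      = Finset.univ.filter (fun u => isEdge k π u v) := by
    ext u
    simp only [hD, Finset.mem_filter, Finset.mem_erase, Finset.mem_univ, true_and, and_true]
    constructor
    · rintro ⟨_, h⟩; exact h
    · intro h; exact ⟨fun he => not_isEdge_self k π hk v (he ▸ h), h⟩
  have hcard : D.card = n - 1 := by
    rw [hD, Finset.card_erase_of_mem (Finset.mem_univ v), Finset.card_univ]
  have hpos' : (0:ℚ) < ((n - 1 : ℕ) : ℚ) := by
    have : 1 ≤ n - 1 := by omega
    exact_mod_cast Nat.lt_of_lt_of_le Nat.zero_lt_one this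
  have havg : (k:ℚ)/2 ≤ avgInweight k π D v := by
    unfold avgInweight
    rw [hfil, hcard]
    have hsc : (∑ u ∈ Finset.univ.filter (fun u => isEdge k π u v),
        (weightFn k π u v : ℚ)) = ((inW k π v : ℕ) : ℚ) := by
      unfold inW
      rw [Nat.cast_sum]
    rw [hsc, div_le_div_iff₀ (by norm_num) hpos']
    have h2 : (k:ℚ) * ((n-1:ℕ):ℚ) ≤ 2 * ((inW k π v : ℕ) : ℚ) := by exact_mod_cast hv
    linarith
  have hW : (k:ℚ)/2 ≤ Wgap k π D := by
    unfold Wgap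
    rw [dif_neg hDne]
    apply Finset.le_inf'
    intro w hw
    have hwv : w = v := by
      rcases Finset.mem_sdiff.mp hw with ⟨_, hwD⟩
      by_contra h
      exact hwD (Finset.mem_erase.mpr ⟨h, Finset.mem_univ w⟩)
    rw [hwv]
    exact havg
  have hmem : D ∈ Finset.univ.filter (fun D : Finset V => IsDomSet k π D) :=
    Finset.mem_filter.mpr ⟨Finset.mem_univ _, hdom⟩
  exact le_trans hW (Finset.le_sup' (fun D => Wgap k π D) hmem)
end

section
/- For any integer k ≥ 2 and any n ≥ 3, the clockwise tournament CW(n) can be realized as a weighted k-majority tournament in which every edge has weight exactly k. -/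
open scoped Classical
open Finset

namespace Stmt8Aux

noncomputable def ord {n : ℕ} (f : Fin n → ℕ) (hf : Function.Injective f) : LinearOrder (Fin n) :=
  LinearOrder.lift' f hf

lemma ord_lt {n : ℕ} (f : Fin n → ℕ) (hf : Function.Injective f) (a b : Fin n) :
    (ord f hf).lt a b ↔ f a < f b := Iff.rfl

def key1 (n : ℕ) (i : Fin n) : ℕ := n - 1 - i.val
def key1d (n : ℕ) (i : Fin n) : ℕ := i.val
def key2 (n : ℕ) (i : Fin n) : ℕ :=
  if i.val < n - n/2 then n - n/2 - 1 - i.val else n - 1 + (n - n/2) - i.val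
def key3 (n : ℕ) (i : Fin n) : ℕ :=
  if i.val < n - n/2 then 2*i.val + 1 else 2*(i.val - n/2)

lemma key1_inj (n : ℕ) : Function.Injective (key1 n) := by
  intro a b h
  have ha := a.isLt; have hb := b.isLt
  unfold key1 at h
  exact Fin.ext (by omega)

lemma key1d_inj (n : ℕ) : Function.Injective (key1d n) := by
  intro a b h
  exact Fin.ext h

lemma key2_inj (n : ℕ) : Function.Injective (key2 n) := by
  intro a b h
  have ha := a.isLt; have hb := b.isLt
  unfold key2 at h
  split_ifs at h <;> exact Fin.ext (by omega)

lemma key3_inj (n : ℕ) : Function.Injective (key3 n) := by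
  intro a b h
  have ha := a.isLt; have hb := b.isLt
  unfold key3 at h
  split_ifs at h <;> exact Fin.ext (by omega)

/-- clean reformulation of the clockwise edge relation -/
def clean (n : ℕ) (u v : Fin n) : Prop :=
  (u.val < v.val ∧ v.val - u.val ≤ n/2) ∨ (v.val < u.val ∧ n/2 < u.val - v.val)

lemma cw_iff {n : ℕ} (hn : 3 ≤ n) (i j : Fin n) : cwEdge n i j ↔ clean n i j := by
  have hi := i.isLt; have hj := j.isLt
  constructor
  · rintro ⟨m, hm1, hm2, hm3⟩
    have hmn : m < n := by split_ifs at hm2 <;> omega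
    rcases Nat.lt_or_ge (i.val + m) n with h | h
    · rw [Nat.mod_eq_of_lt h] at hm3
      left
      split_ifs at hm2 <;> omega
    · have h2 : (i.val + m) % n = i.val + m - n := by
        rw [Nat.mod_eq_sub_mod h, Nat.mod_eq_of_lt (by omega)]
      rw [h2] at hm3
      right
      split_ifs at hm2 <;> omega
  · rintro (⟨h1, h2⟩ | ⟨h1, h2⟩)
    · refine ⟨j.val - i.val, by omega, by split_ifs <;> omega, ?_⟩
      have : i.val + (j.val - i.val) = j.val := by omega
      rw [this, Nat.mod_eq_of_lt hj]
    · refine ⟨n + j.val - i.val, by omega, by split_ifs <;> omega, ?_⟩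
      have : i.val + (n + j.val - i.val) = n + j.val := by omega
      rw [this, Nat.add_mod_left, Nat.mod_eq_of_lt hj]

def cnt (n : ℕ) (u v : Fin n) : ℕ :=
  (if key1 n v < key1 n u then 1 else 0) + (if key2 n v < key2 n u then 1 else 0)
    + (if key3 n v < key3 n u then 1 else 0)

lemma cnt_eq_two {n : ℕ} {u v : Fin n} (h : clean n u v) : cnt n u v = 2 := by
  have hu := u.isLt; have hv := v.isLt
  unfold clean at h
  unfold cnt key1 key2 key3
  split_ifs <;> omega

lemma cnt_add {n : ℕ} {u v : Fin n} (huv : u ≠ v) : cnt n u v + cnt n v u = 3 := by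
  have h1 : key1 n u ≠ key1 n v := fun h => huv (key1_inj n h)
  have h2 : key2 n u ≠ key2 n v := fun h => huv (key2_inj n h)
  have h3 : key3 n u ≠ key3 n v := fun h => huv (key3_inj n h)
  unfold cnt
  split_ifs <;> omega

lemma clean_total {n : ℕ} {u v : Fin n} (huv : u ≠ v) : clean n u v ∨ clean n v u := by
  have : u.val ≠ v.val := fun h => huv (Fin.ext h)
  unfold clean
  omega

lemma clean_irrefl {n : ℕ} (u : Fin n) : ¬ clean n u u := by
  unfold clean; omega

end Stmt8Aux

namespace Stmt8Aux

noncomputable def pis (k n : ℕ) : Fin (2*k-1) → LinearOrder (Fin n) := fun t =>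
  if t.val = 0 then ord (key2 n) (key2_inj n)
  else if t.val = 1 then ord (key3 n) (key3_inj n)
  else if t.val % 2 = 0 then ord (key1 n) (key1_inj n)
  else ord (key1d n) (key1d_inj n)

def Ff (B2 B3 B1 B1d : ℕ) (t : ℕ) : ℕ :=
  if t = 0 then B2 else if t = 1 then B3 else if t % 2 = 0 then B1 else B1d

lemma sum_Ff (B2 B3 B1 B1d : ℕ) (hB : B1 + B1d = 1) (j : ℕ) :
    ∑ t ∈ Finset.range (2*j+3), Ff B2 B3 B1 B1d t = B2 + B3 + B1 + j := by
  induction j with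
  | zero =>
    rw [show 2*0+3 = 3 by norm_num]
    rw [Finset.sum_range_succ, Finset.sum_range_succ, Finset.sum_range_succ,
      Finset.sum_range_zero]
    unfold Ff
    norm_num
  | succ j ih =>
    rw [show 2*(j+1)+3 = (2*j+3) + 1 + 1 by ring]
    rw [Finset.sum_range_succ, Finset.sum_range_succ, ih]
    have h1 : Ff B2 B3 B1 B1d (2*j+3) = B1d := by
      unfold Ff
      rw [if_neg (by omega), if_neg (by omega), if_neg (by omega)]
    have h2 : Ff B2 B3 B1 B1d (2*j+3+1) = B1 := by
      unfold Ff
      rw [if_neg (by omega), if_neg (by omega), if_pos (by omega)]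
    rw [h1, h2]
    omega

lemma weight_eq {k n : ℕ} (hk : 2 ≤ k) {u v : Fin n} (huv : u ≠ v) :
    weightFn k (pis k n) u v = cnt n u v + (k - 2) := by
  classical
  have hval : u.val ≠ v.val := fun h => huv (Fin.ext h)
  have hu := u.isLt; have hv := v.isLt
  set B1 : ℕ := if key1 n v < key1 n u then 1 else 0 with hB1
  set B1d : ℕ := if key1d n v < key1d n u then 1 else 0 with hB1d
  set B2 : ℕ := if key2 n v < key2 n u then 1 else 0 with hB2
  set B3 : ℕ := if key3 n v < key3 n u then 1 else 0 with hB3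
  have hB : B1 + B1d = 1 := by
    rw [hB1, hB1d]
    unfold key1 key1d
    split_ifs <;> omega
  have hcard : weightFn k (pis k n) u v = ∑ t : Fin (2*k-1), Ff B2 B3 B1 B1d t.val := by
    rw [weightFn, Finset.card_filter]
    refine Finset.sum_congr rfl (fun t _ => ?_)
    unfold pis Ff
    by_cases h0 : t.val = 0
    · simp only [h0, if_pos rfl]
      rw [if_pos trivial]
      convert (rfl : (if key2 n v < key2 n u then 1 else 0) = B2) using 2
      rw [if_pos h0]
      exact ord_lt (key2 n) (key2_inj n) v u
    · by_cases h1 : t.val = 1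
      · simp only [h1, if_neg (by omega : (1:ℕ) ≠ 0), if_pos rfl]
        rw [if_pos trivial]
        convert (rfl : (if key3 n v < key3 n u then 1 else 0) = B3) using 2
        rw [if_neg h0, if_pos h1]
        exact ord_lt (key3 n) (key3_inj n) v u
      · by_cases h2 : t.val % 2 = 0
        · simp only [if_neg h0, if_neg h1, if_pos h2]
          convert (rfl : (if key1 n v < key1 n u then 1 else 0) = B1) using 2
          rw [if_neg h0, if_neg h1, if_pos h2]
          exact ord_lt (key1 n) (key1_inj n) v u
        · simp only [if_neg h0, if_neg h1, if_neg h2]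
          convert (rfl : (if key1d n v < key1d n u then 1 else 0) = B1d) using 2
          rw [if_neg h0, if_neg h1, if_neg h2]
          exact ord_lt (key1d n) (key1d_inj n) v u
  rw [hcard, Fin.sum_univ_eq_sum_range (fun t => Ff B2 B3 B1 B1d t) (2*k-1),
    show 2*k-1 = 2*(k-2)+3 by omega, sum_Ff B2 B3 B1 B1d hB (k-2)]
  unfold cnt
  rw [← hB1, ← hB2, ← hB3]
  ring

lemma weight_self {k n : ℕ} (u : Fin n) : weightFn k (pis k n) u u = 0 := by
  classical
  rw [weightFn, Finset.card_filter]
  refine Finset.sum_eq_zero fun t _ => if_neg ?_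
  unfold pis
  split_ifs <;> exact @lt_irrefl (Fin n) (pis k n t).toPartialOrder.toPreorder u

end Stmt8Aux

theorem stmt8 (k n : ℕ) (hk : 2 ≤ k) (hn : 3 ≤ n) :
    ∃ π : Fin (2*k-1) → LinearOrder (Fin n),
      (∀ i j : Fin n, isEdge k π i j ↔ cwEdge n i j) ∧
      (∀ i j : Fin n, cwEdge n i j → weightFn k π i j = k) := by
  refine ⟨Stmt8Aux.pis k n, fun i j => ?_, fun i j hcw => ?_⟩
  · by_cases hij : i = j
    · subst hij
      rw [Stmt8Aux.cw_iff hn]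
      simp only [isEdge, Stmt8Aux.weight_self]
      constructor
      · intro h; omega
      · intro h; exact absurd h (Stmt8Aux.clean_irrefl i)
    · rw [Stmt8Aux.cw_iff hn, isEdge, Stmt8Aux.weight_eq hk hij]
      constructor
      · intro h
        by_contra hcl
        have h2 : Stmt8Aux.clean n j i := (Stmt8Aux.clean_total hij).resolve_left hcl
        have h3 := Stmt8Aux.cnt_eq_two h2
        have h4 := Stmt8Aux.cnt_add hij
        omega
      · intro h
        have h3 := Stmt8Aux.cnt_eq_two h
        omega
  · have hij : i ≠ j := by
      intro h; subst h
      exact Stmt8Aux.clean_irrefl i ((Stmt8Aux.cw_iff hn i i).mp hcw)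
    rw [Stmt8Aux.weight_eq hk hij, Stmt8Aux.cnt_eq_two ((Stmt8Aux.cw_iff hn i j).mp hcw)]
    omega
end

section
/- Let T = CW(n) be a clockwise tournament and let S be a proper subset of V(T). If S = V(T) - {v} for some vertex v, then v is dominated by at most (|S|+1)/2 vertices of S. Otherwise (|V(T)-S| ≥ 2), there exists a vertex v ∉ S such that v is dominated by at most |S|/2 vertices of S. -/
open scoped Classical
open Finset

namespace CWAux

def dd (n : ℕ) (u v : Fin n) : ℕ :=
  if u.val ≤ v.val then v.val - u.val else v.val + n - u.val

def cwB (n : ℕ) (u : Fin n) : ℕ :=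
  if n % 2 = 1 then (n-1)/2 else if u.val < n/2 then n/2 else n/2 - 1

def cwK (n : ℕ) (v : Fin n) : ℕ :=
  if n % 2 = 1 then (n-1)/2 else if v.val < n/2 then n/2 - 1 else n/2

lemma cwEdge_iff {n : ℕ} (u v : Fin n) :
    cwEdge n u v ↔ 1 ≤ dd n u v ∧ dd n u v ≤ cwB n u := by
  have hn : 0 < n := u.pos
  have hu := u.isLt
  have hv := v.isLt
  constructor
  · rintro ⟨m, hm1, hm2, hj⟩
    have hB : m ≤ cwB n u := by unfold cwB; split_ifs at hm2 ⊢ <;> omega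
    have hmn : m < n := by unfold cwB at hB; split_ifs at hB <;> omega
    have hdd : dd n u v = m := by
      rcases lt_or_ge (u.val + m) n with h | h
      · rw [Nat.mod_eq_of_lt h] at hj
        unfold dd
        rw [if_pos (by omega)]
        omega
      · have he : (u.val + m) % n = u.val + m - n := by
          rw [Nat.mod_eq_sub_mod h, Nat.mod_eq_of_lt (by omega)]
        rw [he] at hj
        unfold dd
        rw [if_neg (by omega)]
        omega
    rw [hdd]; exact ⟨hm1, hB⟩
  · rintro ⟨h1, h2⟩
    refine ⟨dd n u v, h1, ?_, ?_⟩
    · unfold cwB at h2; split_ifs at h2 ⊢ <;> omega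
    · unfold dd at h1 ⊢
      split_ifs with h
      · have : u.val + (v.val - u.val) = v.val := by
          rw [if_pos h] at h1; omega
        rw [this, Nat.mod_eq_of_lt hv]
      · have : u.val + (v.val + n - u.val) = v.val + n := by omega
        rw [this, Nat.add_mod_right, Nat.mod_eq_of_lt hv]

lemma not_edge_self {n : ℕ} (v : Fin n) : ¬ cwEdge n v v := by
  rw [cwEdge_iff]
  unfold dd
  simp

lemma cw_total {n : ℕ} (u v : Fin n) (h : u.val ≠ v.val) :
    cwEdge n u v ∨ cwEdge n v u := by
  rw [cwEdge_iff, cwEdge_iff]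
  have hu := u.isLt
  have hv := v.isLt
  unfold dd cwB
  split_ifs <;> omega

lemma card_pred_le {n : ℕ} (v : Fin n) :
    ((univ : Finset (Fin n)).filter (fun u => cwEdge n u v)).card ≤ cwK n v := by
  have hmaps : ∀ u ∈ (univ : Finset (Fin n)).filter (fun u => cwEdge n u v),
      dd n u v ∈ Finset.Icc 1 (cwK n v) := by
    intro u hu
    rw [Finset.mem_filter] at hu
    have h := (cwEdge_iff u v).mp hu.2
    rw [Finset.mem_Icc]
    have hu' := u.isLt
    have hv' := v.isLt
    unfold dd cwB cwK at *
    split_ifs at * <;> omega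
  have hinj : Set.InjOn (fun u => dd n u v)
      ((univ : Finset (Fin n)).filter (fun u => cwEdge n u v)) := by
    intro a ha b hb hab
    have ha' := a.isLt
    have hb' := b.isLt
    simp only [dd] at hab
    apply Fin.ext
    split_ifs at hab <;> omega
  have h := Finset.card_le_card_of_injOn _ hmaps hinj
  rw [Nat.card_Icc] at h
  omega

lemma two_cwK_le {n : ℕ} (v : Fin n) : 2 * cwK n v ≤ n := by
  have := v.pos
  unfold cwK
  split_ifs <;> omega

end CWAux

open CWAux in
theorem stmt10 (n : ℕ) (S : Finset (Fin n)) (hS : S ≠ Finset.univ) :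
    (∀ v : Fin n, S = Finset.univ \ {v} →
        2 * (S.filter (fun u => cwEdge n u v)).card ≤ S.card + 1) ∧
    (2 ≤ (Finset.univ \ S).card →
        ∃ v : Fin n, v ∉ S ∧ 2 * (S.filter (fun u => cwEdge n u v)).card ≤ S.card) := by
  constructor
  · intro v hSv
    have hn : 0 < n := v.pos
    have hcard : S.card = n - 1 := by
      rw [hSv, Finset.card_sdiff_of_subset (Finset.subset_univ _)]
      simp
    have hfe : S.filter (fun u => cwEdge n u v) = univ.filter (fun u => cwEdge n u v) := by
      rw [hSv]
      ext u
      simp only [Finset.mem_filter, Finset.mem_sdiff, Finset.mem_univ, true_and,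
        Finset.mem_singleton]
      constructor
      · rintro ⟨_, h⟩; exact h
      · intro h
        refine ⟨?_, h⟩
        rintro rfl
        exact not_edge_self _ h
    rw [hfe]
    have h1 := card_pred_le v
    have h2 := two_cwK_le v
    omega
  · intro hC2
    set C := (univ : Finset (Fin n)) \ S with hCdef
    obtain ⟨v0, hv0⟩ : C.Nonempty := Finset.card_pos.mp (by omega)
    have hn : 0 < n := v0.pos
    have hScard : S.card + C.card = n := by
      have h1 : C.card = Finset.univ.card - S.card :=
        Finset.card_sdiff_of_subset (Finset.subset_univ S)
      have h2 : S.card ≤ Finset.univ.card := Finset.card_le_univ S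
      have h3 : (Finset.univ : Finset (Fin n)).card = n := by simp
      omega
    -- in-degree within C, and sum lower bound
    have hlow : ∀ v ∈ C, C.card ≤ (C.filter (fun u => cwEdge n u v)).card
        + (C.filter (fun w => cwEdge n v w)).card + 1 := by
      intro v hv
      have hsub : C.erase v ⊆
          C.filter (fun u => cwEdge n u v) ∪ C.filter (fun w => cwEdge n v w) := by
        intro u hu
        rw [Finset.mem_erase] at hu
        rcases cw_total u v (fun h => hu.1 (Fin.ext h)) with h | h
        · exact Finset.mem_union_left _ (Finset.mem_filter.mpr ⟨hu.2, h⟩)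
        · exact Finset.mem_union_right _ (Finset.mem_filter.mpr ⟨hu.2, h⟩)
      have h1 := Finset.card_le_card hsub
      have h2 := Finset.card_union_le (C.filter (fun u => cwEdge n u v))
        (C.filter (fun w => cwEdge n v w))
      have h3 : (C.erase v).card = C.card - 1 := Finset.card_erase_of_mem hv
      have h4 : 1 ≤ C.card := Finset.card_pos.mpr ⟨v, hv⟩
      omega
    have hswap : ∑ v ∈ C, (C.filter (fun u => cwEdge n u v)).card
        = ∑ v ∈ C, (C.filter (fun w => cwEdge n v w)).card := by
      simp only [Finset.card_filter]
      exact Finset.sum_comm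
    have hsum : C.card * C.card ≤ (∑ v ∈ C, 2 * (C.filter (fun u => cwEdge n u v)).card)
        + C.card := by
      have step : C.card * C.card ≤ ∑ v ∈ C, ((C.filter (fun u => cwEdge n u v)).card
          + (C.filter (fun w => cwEdge n v w)).card + 1) := by
        calc C.card * C.card = ∑ _v ∈ C, C.card := by
              rw [Finset.sum_const, smul_eq_mul]
          _ ≤ _ := Finset.sum_le_sum hlow
      rw [Finset.sum_add_distrib, Finset.sum_add_distrib, ← hswap, Finset.sum_const,
        smul_eq_mul, mul_one] at step
      calc C.card * C.card ≤ _ := step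
        _ = _ := by
          rw [← Finset.sum_add_distrib]
          congr 1
          apply Finset.sum_congr rfl
          intro v _
          omega
    -- key existence
    have key : ∃ v ∈ C, 2 * cwK n v + C.card
        ≤ 2 * (C.filter (fun u => cwEdge n u v)).card + n := by
      by_contra hno
      push_neg at hno
      rcases Nat.mod_two_eq_zero_or_one n with hpar | hpar
      · -- even n
        by_cases hall : ∀ v ∈ C, n/2 ≤ v.val
        · -- C contained in upper half: take the maximum
          set v := C.max' ⟨v0, hv0⟩ with hvdef
          have hvC : v ∈ C := C.max'_mem _
          have hsub : C.erase v ⊆ C.filter (fun u => cwEdge n u v) := by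
            intro u hu
            rw [Finset.mem_erase] at hu
            refine Finset.mem_filter.mpr ⟨hu.2, ?_⟩
            have hle : u ≤ v := Finset.le_max' C u hu.2
            have hlt : u.val < v.val := by
              rcases lt_or_eq_of_le hle with h | h
              · exact h
              · exact absurd h hu.1
            rw [cwEdge_iff]
            unfold dd cwB
            have h1 := hall u hu.2
            have h2 := v.isLt
            rw [if_pos (le_of_lt hlt)]
            split_ifs <;> omega
          have h1 := Finset.card_le_card hsub
          have h3 : (C.erase v).card = C.card - 1 := Finset.card_erase_of_mem hvC
          have h4 := hno v hvC
          have h5 : ¬ (v.val < n/2) := by have := hall v hvC; omega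
          have h6 : cwK n v = n/2 := by unfold cwK; split_ifs <;> omega
          omega
        · -- some vertex of C in lower half
          push_neg at hall
          obtain ⟨w, hwC, hw⟩ := hall
          have hwK : cwK n w = n/2 - 1 := by unfold cwK; split_ifs <;> omega
          have hw3 : 2 * (C.filter (fun u => cwEdge n u w)).card + 3 ≤ C.card := by
            have := hno w hwC
            rw [hwK] at this
            omega
          have hptw : ∀ v ∈ C, 2 * (C.filter (fun u => cwEdge n u v)).card + 1 ≤ C.card := by
            intro v hv
            have h1 := hno v hv
            have h2 := two_cwK_le v
            omega
          -- sum upper bound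
          have herase : ∑ v ∈ C, (2 * (C.filter (fun u => cwEdge n u v)).card + 1)
              = (2 * (C.filter (fun u => cwEdge n u w)).card + 1)
                + ∑ v ∈ C.erase w, (2 * (C.filter (fun u => cwEdge n u v)).card + 1) :=
            (Finset.add_sum_erase C _ hwC).symm
          have hub : ∑ v ∈ C.erase w, (2 * (C.filter (fun u => cwEdge n u v)).card + 1)
              ≤ (C.erase w).card * C.card := by
            calc _ ≤ ∑ _v ∈ C.erase w, C.card :=
                  Finset.sum_le_sum (fun v hv => hptw v (Finset.mem_of_mem_erase hv))
              _ = (C.erase w).card * C.card := by rw [Finset.sum_const, smul_eq_mul]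
          have hdistr : ∑ v ∈ C, (2 * (C.filter (fun u => cwEdge n u v)).card + 1)
              = (∑ v ∈ C, 2 * (C.filter (fun u => cwEdge n u v)).card) + C.card := by
            rw [Finset.sum_add_distrib, Finset.sum_const, smul_eq_mul, mul_one]
          have hec : (C.erase w).card = C.card - 1 := Finset.card_erase_of_mem hwC
          have hmul : (C.erase w).card * C.card + C.card = C.card * C.card := by
            have h : (C.erase w).card + 1 = C.card := by
              have : 1 ≤ C.card := Finset.card_pos.mpr ⟨w, hwC⟩
              omega
            calc (C.erase w).card * C.card + C.card = ((C.erase w).card + 1) * C.card := by ring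
              _ = C.card * C.card := by rw [h]
          omega
      · -- odd n
        have hpt : ∀ v ∈ C, 2 * (C.filter (fun u => cwEdge n u v)).card + 2 ≤ C.card := by
          intro v hv
          have h1 := hno v hv
          have h2 : cwK n v = (n-1)/2 := by unfold cwK; split_ifs <;> omega
          omega
        have hub : ∑ v ∈ C, (2 * (C.filter (fun u => cwEdge n u v)).card + 2)
            ≤ C.card * C.card := by
          calc _ ≤ ∑ _v ∈ C, C.card := Finset.sum_le_sum hpt
            _ = C.card * C.card := by rw [Finset.sum_const, smul_eq_mul]
        have hdistr : ∑ v ∈ C, (2 * (C.filter (fun u => cwEdge n u v)).card + 2)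
            = (∑ v ∈ C, 2 * (C.filter (fun u => cwEdge n u v)).card) + 2 * C.card := by
          rw [Finset.sum_add_distrib, Finset.sum_const, smul_eq_mul]
          ring
        omega
    obtain ⟨v, hvC, hgood⟩ := key
    refine ⟨v, (Finset.mem_sdiff.mp hvC).2, ?_⟩
    have hunion : S.filter (fun u => cwEdge n u v) ∪ C.filter (fun u => cwEdge n u v)
        = univ.filter (fun u => cwEdge n u v) := by
      rw [← Finset.filter_union, Finset.union_sdiff_of_subset (Finset.subset_univ S)]
    have hdisj : Disjoint (S.filter (fun u => cwEdge n u v))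
        (C.filter (fun u => cwEdge n u v)) :=
      Finset.disjoint_filter_filter Finset.disjoint_sdiff
    have hadd : (S.filter (fun u => cwEdge n u v)).card
        + (C.filter (fun u => cwEdge n u v)).card
        = (univ.filter (fun u => cwEdge n u v)).card := by
      rw [← Finset.card_union_of_disjoint hdisj, hunion]
    have h1 := card_pred_le v
    omega
end

section
/- Let T be the weighted tournament on three vertices a, b, c with edges a→b of weight 2q, b→c of weight k, and c→a of weight k, where k ≥ 2, 2q is an integer, and k/2 ≤ q ≤ k-1. Then γ_w(T) = q. -/
open scoped Classical
open Finset

lemma ltiff {α : Type} [LinearOrder α] {u v : α} (h : u ≠ v) : (¬ v < u) ↔ u < v := by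
  constructor
  · intro hv; exact lt_of_le_of_ne (not_lt.mp hv) h
  · intro hv hv'; exact absurd (hv.trans hv') (lt_irrefl _)

lemma wsum (k : ℕ) (π : Fin (2*k-1) → LinearOrder (Fin 3)) (u v : Fin 3) (h : u ≠ v) :
    weightFn k π u v + weightFn k π v u = 2*k-1 := by
  have key : ∀ i : Fin (2*k-1), (¬ (π i).lt v u) ↔ (π i).lt u v :=
    fun i => @ltiff (Fin 3) (π i) u v h
  have h2 : weightFn k π v u = (Finset.univ.filter (fun i => ¬ (π i).lt v u)).card := by
    unfold weightFn
    congr 1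
    ext i
    simp [key i]
  rw [h2]
  unfold weightFn
  rw [Finset.card_filter_add_card_filter_not]
  simp

lemma Wgap_le (k : ℕ) (π : Fin (2*k-1) → LinearOrder (Fin 3)) (D : Finset (Fin 3))
    (v : Fin 3) (hv : v ∉ D) : Wgap k π D ≤ avgInweight k π D v := by
  unfold Wgap
  by_cases h : D = Finset.univ
  · exact absurd (h ▸ Finset.mem_univ v) hv
  · rw [dif_neg h]
    exact Finset.inf'_le _ ((@Finset.mem_sdiff (Fin 3) (fun a b => Classical.propDecidable (a = b)) _ _ _).mpr ⟨Finset.mem_univ v, hv⟩)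

theorem stmt15 (k : ℕ) (hk : 2 ≤ k) (q : ℚ) (hq2 : ∃ m : ℤ, 2*q = m)
    (hql : (k:ℚ)/2 ≤ q) (hqu : q ≤ (k:ℚ)-1)
    (π : Fin (2*k-1) → LinearOrder (Fin 3))
    (hab : isEdge k π 0 1 ∧ (weightFn k π 0 1 : ℚ) = 2*q)
    (hbc : isEdge k π 1 2 ∧ weightFn k π 1 2 = k)
    (hca : isEdge k π 2 0 ∧ weightFn k π 2 0 = k) :
    gammaW k π = q := by
  obtain ⟨e01, hw01⟩ := hab
  obtain ⟨e12, hw12⟩ := hbc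
  obtain ⟨e20, hw20⟩ := hca
  have hk2 : (2:ℚ) ≤ (k:ℚ) := by exact_mod_cast hk
  have hq1 : (1:ℚ) ≤ q := by linarith
  have hs01 := wsum k π 0 1 (by decide)
  have hs12 := wsum k π 1 2 (by decide)
  have hs20 := wsum k π 2 0 (by decide)
  have hw01k : k ≤ weightFn k π 0 1 := by
    have : (k:ℚ) ≤ (weightFn k π 0 1 : ℚ) := by rw [hw01]; linarith
    exact_mod_cast this
  have n10 : ¬ isEdge k π 1 0 := by intro hcon; unfold isEdge at hcon; omega
  have n21 : ¬ isEdge k π 2 1 := by intro hcon; unfold isEdge at hcon; omega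
  have n02 : ¬ isEdge k π 0 2 := by intro hcon; unfold isEdge at hcon; omega
  have hf02 : ({0,2} : Finset (Fin 3)).filter (fun u => isEdge k π u 1) = {0} := by
    ext u; fin_cases u <;> simp [e01, n21]
  have hf01 : ({0,1} : Finset (Fin 3)).filter (fun u => isEdge k π u 2) = {1} := by
    ext u; fin_cases u <;> simp [e12, n02]
  have hf12 : ({1,2} : Finset (Fin 3)).filter (fun u => isEdge k π u 0) = {2} := by
    ext u; fin_cases u <;> simp [e20, n10]
  have avg02 : avgInweight k π {0,2} 1 = q := by
    unfold avgInweight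
    rw [hf02, Finset.sum_singleton, hw01,
      show ({0,2} : Finset (Fin 3)).card = 2 from by decide]
    push_cast; ring
  have avg01 : avgInweight k π {0,1} 2 = (k:ℚ)/2 := by
    unfold avgInweight
    rw [hf01, Finset.sum_singleton, hw12,
      show ({0,1} : Finset (Fin 3)).card = 2 from by decide]
    norm_num
  have avg12 : avgInweight k π {1,2} 0 = (k:ℚ)/2 := by
    unfold avgInweight
    rw [hf12, Finset.sum_singleton, hw20,
      show ({1,2} : Finset (Fin 3)).card = 2 from by decide]
    norm_num
  have hdom02 : IsDomSet k π {0,2} := by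
    intro v hv
    fin_cases v
    · exact absurd (by decide) hv
    · exact ⟨0, by decide, e01⟩
    · exact absurd (by decide) hv
  have hW02 : q ≤ Wgap k π {0,2} := by
    unfold Wgap
    rw [dif_neg (by decide : ({0,2}:Finset (Fin 3)) ≠ Finset.univ)]
    apply Finset.le_inf'
    intro v hv
    rw [@Finset.mem_sdiff (Fin 3) (fun a b => Classical.propDecidable (a = b))] at hv
    fin_cases v
    · exact absurd (by decide) hv.2
    · exact le_of_eq avg02.symm
    · exact absurd (by decide) hv.2
  apply le_antisymm
  · unfold gammaW
    apply Finset.sup'_le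
    intro D hD
    have hdom : IsDomSet k π D := (Finset.mem_filter.mp hD).2
    by_cases h0 : (0:Fin 3) ∈ D <;> by_cases h1 : (1:Fin 3) ∈ D <;>
      by_cases h2 : (2:Fin 3) ∈ D
    · -- univ
      have hDeq : D = Finset.univ := by ext x; fin_cases x <;> simp [h0, h1, h2]
      subst hDeq
      unfold Wgap
      rw [dif_pos rfl]
      linarith
    · -- {0,1}
      have hDeq : D = {0,1} := by ext x; fin_cases x <;> simp [h0, h1, h2]
      subst hDeq
      refine le_trans (Wgap_le k π _ 2 (by decide)) ?_
      rw [avg01]; linarith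
    · -- {0,2}
      have hDeq : D = {0,2} := by ext x; fin_cases x <;> simp [h0, h1, h2]
      subst hDeq
      exact le_trans (Wgap_le k π _ 1 (by decide)) (le_of_eq avg02)
    · -- {0}
      obtain ⟨u, hu, he⟩ := hdom 2 h2
      have hDeq : D = {0} := by ext x; fin_cases x <;> simp [h0, h1, h2]
      rw [hDeq] at hu
      fin_cases u
      · exact absurd he n02
      · exact absurd hu (by decide)
      · exact absurd hu (by decide)
    · -- {1,2}
      have hDeq : D = {1,2} := by ext x; fin_cases x <;> simp [h0, h1, h2]
      subst hDeq
      refine le_trans (Wgap_le k π _ 0 (by decide)) ?_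
      rw [avg12]; linarith
    · -- {1}
      obtain ⟨u, hu, he⟩ := hdom 0 h0
      have hDeq : D = {1} := by ext x; fin_cases x <;> simp [h0, h1, h2]
      rw [hDeq] at hu
      fin_cases u
      · exact absurd hu (by decide)
      · exact absurd he n10
      · exact absurd hu (by decide)
    · -- {2}
      obtain ⟨u, hu, he⟩ := hdom 1 h1
      have hDeq : D = {2} := by ext x; fin_cases x <;> simp [h0, h1, h2]
      rw [hDeq] at hu
      fin_cases u
      · exact absurd hu (by decide)
      · exact absurd hu (by decide)
      · exact absurd he n21
    · -- ∅
      obtain ⟨u, hu, he⟩ := hdom 0 h0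
      have hDeq : D = ∅ := by ext x; fin_cases x <;> simp [h0, h1, h2]
      rw [hDeq] at hu
      exact absurd hu (Finset.notMem_empty u)
  · unfold gammaW
    have hmem : ({0,2}:Finset (Fin 3)) ∈
        Finset.univ.filter (fun D : Finset (Fin 3) => IsDomSet k π D) :=
      Finset.mem_filter.mpr ⟨Finset.mem_univ _, hdom02⟩
    exact le_trans hW02 (Finset.le_sup' (fun D => Wgap k π D) hmem)
end

section
/- For k ≥ 2 and rational q with 2q an integer and k/2 ≤ q ≤ k-1, the minimum number of vertices m(q,k) of a weighted k-majority tournament T with γ_w(T) = q equals 3. In particular, every weighted k-majority tournament on 2 vertices has γ_w(T) ≥ k, and every one on 1 vertex has γ_w(T) = 0. -/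
open scoped Classical
open Finset

noncomputable section

section Aux
def rk (t k : ℕ) (i : ℕ) : Fin 3 → ℕ :=
  if i < t+1 then ![2,1,0]
  else if i < 2*t+2 then ![1,0,2]
  else if i < k+t+1 then ![0,2,1]
  else ![2,0,1]

lemma rk_inj (t k i : ℕ) : Function.Injective (rk t k i) := by
  unfold rk; split_ifs <;> decide

def myπ (t k : ℕ) : Fin (2*k-1) → LinearOrder (Fin 3) :=
  fun i => LinearOrder.lift' (rk t k i.val) (rk_inj t k i.val)

lemma myπ_lt (t k : ℕ) (i : Fin (2*k-1)) (u v : Fin 3) :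
    (myπ t k i).lt u v ↔ rk t k i.val u < rk t k i.val v := Iff.rfl

lemma weight_eq_card (t k : ℕ) (u v : Fin 3) (s : Finset ℕ) (hs : ∀ j ∈ s, j < 2*k-1)
    (h : ∀ i < 2*k-1, (rk t k i v < rk t k i u ↔ i ∈ s)) :
    weightFn k (myπ t k) u v = s.card := by
  unfold weightFn
  apply Finset.card_bij (fun i _ => i.val)
  · intro a ha
    simp only [Finset.mem_filter, Finset.mem_univ, true_and] at ha
    exact (h a.val a.isLt).mp ((myπ_lt ..).mp ha)
  · intro a _ b _ hab; exact Fin.ext hab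
  · intro j hj
    refine ⟨⟨j, hs j hj⟩, ?_, rfl⟩
    simp only [Finset.mem_filter, Finset.mem_univ, true_and]
    exact (myπ_lt ..).mpr ((h j (hs j hj)).mpr hj)

variable {t k : ℕ}

lemma w01 (htk : t + 2 ≤ k) : weightFn k (myπ t k) 0 1 = k + t := by
  rw [weight_eq_card t k 0 1 (Finset.range (2*t+2) ∪ Finset.Ico (k+t+1) (2*k-1))
    (by intro j hj; simp [Finset.mem_union, Finset.mem_Ico] at hj; omega)
    (by intro i hi; unfold rk
        simp only [Finset.mem_union, Finset.mem_range, Finset.mem_Ico]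
        split_ifs <;> simp <;> omega)]
  rw [Finset.card_union_of_disjoint (by
    rw [Finset.disjoint_left]; intro x hx hx'
    simp [Finset.mem_range] at hx; simp [Finset.mem_Ico] at hx'; omega)]
  rw [Finset.card_range, Nat.card_Ico]; omega

lemma w12 (htk : t + 2 ≤ k) : weightFn k (myπ t k) 1 2 = k := by
  rw [weight_eq_card t k 1 2 (Finset.range (t+1) ∪ Finset.Ico (2*t+2) (k+t+1))
    (by intro j hj; simp [Finset.mem_union, Finset.mem_Ico] at hj; omega)
    (by intro i hi; unfold rk
        simp only [Finset.mem_union, Finset.mem_range, Finset.mem_Ico]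
        split_ifs <;> simp <;> omega)]
  rw [Finset.card_union_of_disjoint (by
    rw [Finset.disjoint_left]; intro x hx hx'
    simp [Finset.mem_range] at hx; simp [Finset.mem_Ico] at hx'; omega)]
  rw [Finset.card_range, Nat.card_Ico]; omega

lemma w20 (htk : t + 2 ≤ k) : weightFn k (myπ t k) 2 0 = k := by
  rw [weight_eq_card t k 2 0 (Finset.Ico (t+1) (k+t+1))
    (by intro j hj; simp [Finset.mem_Ico] at hj; omega)
    (by intro i hi; unfold rk
        simp only [Finset.mem_Ico]
        split_ifs <;> simp <;> omega)]
  rw [Nat.card_Ico]; omega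

lemma w10 (htk : t + 2 ≤ k) : weightFn k (myπ t k) 1 0 = k - 1 - t := by
  rw [weight_eq_card t k 1 0 (Finset.Ico (2*t+2) (k+t+1))
    (by intro j hj; simp [Finset.mem_Ico] at hj; omega)
    (by intro i hi; unfold rk
        simp only [Finset.mem_Ico]
        split_ifs <;> simp <;> omega)]
  rw [Nat.card_Ico]; omega

lemma w21 (htk : t + 2 ≤ k) : weightFn k (myπ t k) 2 1 = k - 1 := by
  rw [weight_eq_card t k 2 1 (Finset.Ico (t+1) (2*t+2) ∪ Finset.Ico (k+t+1) (2*k-1))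
    (by intro j hj; simp [Finset.mem_union, Finset.mem_Ico] at hj; omega)
    (by intro i hi; unfold rk
        simp only [Finset.mem_union, Finset.mem_Ico]
        split_ifs <;> simp <;> omega)]
  rw [Finset.card_union_of_disjoint (by
    rw [Finset.disjoint_left]; intro x hx hx'
    simp [Finset.mem_Ico] at hx hx'; omega)]
  rw [Nat.card_Ico, Nat.card_Ico]; omega

lemma w02 (htk : t + 2 ≤ k) : weightFn k (myπ t k) 0 2 = k - 1 := by
  rw [weight_eq_card t k 0 2 (Finset.range (t+1) ∪ Finset.Ico (k+t+1) (2*k-1))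
    (by intro j hj; simp [Finset.mem_union, Finset.mem_Ico] at hj; omega)
    (by intro i hi; unfold rk
        simp only [Finset.mem_union, Finset.mem_range, Finset.mem_Ico]
        split_ifs <;> simp <;> omega)]
  rw [Finset.card_union_of_disjoint (by
    rw [Finset.disjoint_left]; intro x hx hx'
    simp [Finset.mem_range] at hx; simp [Finset.mem_Ico] at hx'; omega)]
  rw [Finset.card_range, Nat.card_Ico]; omega

lemma wdiag (u : Fin 3) : weightFn k (myπ t k) u u = 0 := by
  rw [weight_eq_card t k u u ∅ (by simp)
    (by intro i hi; simp)]
  simp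

lemma edge_iff (htk : t + 2 ≤ k) (u v : Fin 3) :
    isEdge k (myπ t k) u v ↔ u = ![2,0,1] v := by
  fin_cases u <;> fin_cases v <;>
    simp [isEdge, w01 htk, w12 htk, w20 htk, w10 htk, w21 htk, w02 htk, wdiag] <;>
    omega

lemma weight_le (htk : t + 2 ≤ k) (u v : Fin 3) : weightFn k (myπ t k) u v ≤ k + t := by
  fin_cases u <;> fin_cases v <;>
    simp [w01 htk, w12 htk, w20 htk, w10 htk, w21 htk, w02 htk, wdiag] <;> omega

lemma sum_in_le (htk : t + 2 ≤ k) (D : Finset (Fin 3)) (v : Fin 3) :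
    (∑ u ∈ D.filter (fun u => isEdge k (myπ t k) u v), (weightFn k (myπ t k) u v : ℚ))
      ≤ ((k : ℚ) + t) := by
  have hsub : D.filter (fun u => isEdge k (myπ t k) u v) ⊆ {![2,0,1] v} := by
    intro u hu
    rw [Finset.mem_filter] at hu
    rw [Finset.mem_singleton]
    exact (edge_iff htk u v).mp hu.2
  calc (∑ u ∈ D.filter (fun u => isEdge k (myπ t k) u v), (weightFn k (myπ t k) u v : ℚ))
      ≤ ∑ u ∈ ({![2,0,1] v} : Finset (Fin 3)), (weightFn k (myπ t k) u v : ℚ) :=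
        Finset.sum_le_sum_of_subset_of_nonneg hsub (fun u _ _ => by positivity)
    _ = (weightFn k (myπ t k) (![2,0,1] v) v : ℚ) := Finset.sum_singleton _ _
    _ ≤ ((k : ℚ) + t) := by
        have := weight_le htk (![2,0,1] v) v
        push_cast
        exact_mod_cast Nat.cast_le.mpr this |>.trans (by push_cast; linarith)

lemma dom_card (htk : t + 2 ≤ k) (D : Finset (Fin 3)) (hD : IsDomSet k (myπ t k) D)
    (hne : D ≠ Finset.univ) : D.card = 2 := by
  have h3 : D.card ≤ 3 := le_trans (Finset.card_le_univ D) (by simp)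
  have hne3 : D.card ≠ 3 := by
    intro h; exact hne (Finset.eq_univ_of_card D (by simpa using h))
  have h2 : 2 ≤ D.card := by
    by_contra hlt
    push_neg at hlt
    interval_cases h : D.card
    · -- empty
      have hDe : D = ∅ := Finset.card_eq_zero.mp h
      obtain ⟨u, hu, _⟩ := hD 0 (by simp [hDe])
      simp [hDe] at hu
    · obtain ⟨u0, hu0⟩ := Finset.card_eq_one.mp h
      subst hu0
      fin_cases u0
      · obtain ⟨u, hu, he⟩ := hD 2 (by decide)
        rw [Finset.mem_singleton] at hu; subst hu
        rw [edge_iff htk] at he; exact absurd he (by decide)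
      · obtain ⟨u, hu, he⟩ := hD 0 (by decide)
        rw [Finset.mem_singleton] at hu; subst hu
        rw [edge_iff htk] at he; exact absurd he (by decide)
      · obtain ⟨u, hu, he⟩ := hD 1 (by decide)
        rw [Finset.mem_singleton] at hu; subst hu
        rw [edge_iff htk] at he; exact absurd he (by decide)
  omega

lemma Wgap_le_avg {V : Type} [Fintype V] (k : ℕ) (π : Fin (2*k-1) → LinearOrder V)
    (D : Finset V) (h : D ≠ Finset.univ) (v : V) (hv : v ∉ D) :
    Wgap k π D ≤ avgInweight k π D v := by
  rw [Wgap, dif_neg h]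
  exact Finset.inf'_le _ (Finset.mem_sdiff.mpr ⟨Finset.mem_univ _, hv⟩)

lemma le_Wgap {V : Type} [Fintype V] (k : ℕ) (π : Fin (2*k-1) → LinearOrder V)
    (D : Finset V) (h : D ≠ Finset.univ) (b : ℚ)
    (hall : ∀ v, v ∉ D → b ≤ avgInweight k π D v) : b ≤ Wgap k π D := by
  rw [Wgap, dif_neg h]
  apply Finset.le_inf'
  intro v hv
  exact hall v (Finset.mem_sdiff.mp hv).2

lemma Wgap_le_s16 (htk : t + 2 ≤ k) (D : Finset (Fin 3)) (hD : IsDomSet k (myπ t k) D) :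
    Wgap k (myπ t k) D ≤ ((k:ℚ) + t)/2 := by
  by_cases h : D = Finset.univ
  · rw [Wgap, dif_pos h]; positivity
  · have hcard := dom_card htk D hD h
    obtain ⟨v, hv⟩ : ∃ v, v ∉ D := by
      by_contra h'
      push_neg at h'
      exact h (Finset.eq_univ_iff_forall.mpr h')
    refine le_trans (Wgap_le_avg k _ D h v hv) ?_
    rw [avgInweight]
    have h2 : ((D.card : ℚ)) = 2 := by rw [hcard]; norm_num
    rw [h2]
    have hsum := sum_in_le htk D v
    linarith

lemma dom02 (htk : t + 2 ≤ k) : IsDomSet k (myπ t k) ({0, 2} : Finset (Fin 3)) := by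
  intro v hv
  have hv1 : v = 1 := by fin_cases v <;> simp_all
  subst hv1
  exact ⟨0, by decide, (edge_iff htk 0 1).mpr (by decide)⟩

lemma avg02 (htk : t + 2 ≤ k) :
    avgInweight k (myπ t k) ({0, 2} : Finset (Fin 3)) 1 = ((k:ℚ) + t)/2 := by
  rw [avgInweight]
  have hf : ({0, 2} : Finset (Fin 3)).filter (fun u => isEdge k (myπ t k) u 1) = {0} := by
    ext u
    rw [Finset.mem_filter, edge_iff htk]
    fin_cases u <;> simp <;> decide
  have hc : ({0, 2} : Finset (Fin 3)).card = 2 := by decide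
  rw [hf, Finset.sum_singleton, w01 htk, hc]
  push_cast
  ring

lemma Wgap02 (htk : t + 2 ≤ k) :
    Wgap k (myπ t k) ({0, 2} : Finset (Fin 3)) = ((k:ℚ) + t)/2 := by
  have hne : ({0, 2} : Finset (Fin 3)) ≠ Finset.univ := by decide
  apply le_antisymm
  · refine le_trans (Wgap_le_avg k _ _ hne 1 (by decide)) ?_
    rw [avg02 htk]
  · apply le_Wgap k _ _ hne
    intro v hv
    have hv1 : v = 1 := by fin_cases v <;> simp_all
    subst hv1
    rw [avg02 htk]

lemma gamma_myπ (htk : t + 2 ≤ k) : gammaW k (myπ t k) = ((k:ℚ) + t)/2 := by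
  apply le_antisymm
  · apply Finset.sup'_le
    intro D hD
    rw [Finset.mem_filter] at hD
    exact Wgap_le_s16 htk D hD.2
  · rw [← Wgap02 htk]
    exact Finset.le_sup' _ (Finset.mem_filter.mpr ⟨Finset.mem_univ _, dom02 htk⟩)

lemma weightFn_self_s16 {V : Type} [Fintype V] (k : ℕ) (π : Fin (2*k-1) → LinearOrder V) (u : V) :
    weightFn k π u u = 0 := by
  rw [weightFn, Finset.card_eq_zero, Finset.filter_eq_empty_iff]
  intro i _
  rw [(π i).lt_iff_le_not_ge]
  tauto

lemma gamma_small {V : Type} [Fintype V] (k : ℕ) (hk : 2 ≤ k)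
    (π : Fin (2*k-1) → LinearOrder V) (h : Fintype.card V ≤ 1) : gammaW k π = 0 := by
  have hsub : Subsingleton V := Fintype.card_le_one_iff_subsingleton.mp h
  have hfilt : (Finset.univ.filter (fun D : Finset V => IsDomSet k π D)) = {Finset.univ} := by
    ext D
    rw [Finset.mem_filter, Finset.mem_singleton]
    constructor
    · rintro ⟨-, hD⟩
      by_contra hne
      obtain ⟨v, hv⟩ : ∃ v, v ∉ D := by
        by_contra h'
        push_neg at h'
        exact hne (Finset.eq_univ_iff_forall.mpr h')
      obtain ⟨u, hu, he⟩ := hD v hv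
      have huv : u = v := Subsingleton.elim u v
      subst huv
      rw [isEdge, weightFn_self_s16] at he
      omega
    · rintro rfl
      exact ⟨Finset.mem_univ _, fun v hv => absurd (Finset.mem_univ v) hv⟩
  rw [gammaW]
  apply le_antisymm
  · apply Finset.sup'_le
    intro D hD
    rw [hfilt, Finset.mem_singleton] at hD
    subst hD
    rw [Wgap, dif_pos rfl]
  · refine le_trans (le_of_eq ?_) (Finset.le_sup' (fun D => Wgap k π D) (s := Finset.univ.filter (fun D : Finset V => IsDomSet k π D)) (b := Finset.univ) (by rw [hfilt]; exact Finset.mem_singleton_self _))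
    rw [Wgap, dif_pos rfl]

lemma weight_total {V : Type} [Fintype V] (k : ℕ) (π : Fin (2*k-1) → LinearOrder V)
    {a b : V} (hab : a ≠ b) : weightFn k π a b + weightFn k π b a = 2*k-1 := by
  have key : (Finset.univ.filter (fun i : Fin (2*k-1) => (π i).lt a b))
      = Finset.univ \ (Finset.univ.filter (fun i => (π i).lt b a)) := by
    ext i
    simp only [Finset.mem_filter, Finset.mem_sdiff, Finset.mem_univ, true_and]
    letI := π i
    constructor
    · intro h1 h2
      exact absurd (h1.trans h2) (lt_irrefl a)
    · intro h1
      rcases lt_trichotomy a b with h | h | h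
      · exact h
      · exact absurd h hab
      · exact absurd h h1
  have hle := Finset.card_filter_le (Finset.univ : Finset (Fin (2*k-1)))
    (fun i => (π i).lt b a)
  rw [weightFn, weightFn, key, Finset.card_sdiff_of_subset (Finset.filter_subset _ _)]
  rw [Finset.card_univ, Fintype.card_fin] at *
  omega

lemma gamma_two_aux {V : Type} [Fintype V] (k : ℕ) (hk : 2 ≤ k)
    (π : Fin (2*k-1) → LinearOrder V) (a b : V) (hab : a ≠ b)
    (huniv : ({a, b} : Finset V) = Finset.univ) (hw : k ≤ weightFn k π a b) :
    (k : ℚ) ≤ gammaW k π := by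
  have hmem : ∀ v : V, v = a ∨ v = b := by
    intro v
    have : v ∈ ({a, b} : Finset V) := huniv ▸ Finset.mem_univ v
    simpa using this
  have hdom : IsDomSet k π {a} := by
    intro v hv
    have hvb : v = b := by
      rcases hmem v with h | h
      · subst h; exact absurd (Finset.mem_singleton_self v) hv
      · exact h
    exact ⟨a, Finset.mem_singleton_self a, hvb ▸ hw⟩
  have hneuniv : ({a} : Finset V) ≠ Finset.univ := by
    intro h
    have : b ∈ ({a} : Finset V) := h ▸ Finset.mem_univ b
    exact hab (Finset.mem_singleton.mp this).symm
  have havg : (k:ℚ) ≤ avgInweight k π {a} b := by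
    rw [avgInweight]
    have hf : ({a} : Finset V).filter (fun u => isEdge k π u b) = {a} := by
      rw [Finset.filter_eq_self]
      intro u hu
      rw [Finset.mem_singleton] at hu
      subst hu
      exact hw
    rw [hf, Finset.sum_singleton, Finset.card_singleton]
    push_cast
    rw [div_one]
    exact_mod_cast hw
  have hWgap : (k:ℚ) ≤ Wgap k π {a} := by
    rw [Wgap, dif_neg hneuniv]
    apply Finset.le_inf'
    intro v hv
    have hvb : v = b := by
      rcases hmem v with h | h
      · rw [Finset.mem_sdiff] at hv; simp [h] at hv
      · exact h
    subst hvb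
    exact havg
  refine le_trans hWgap ?_
  exact Finset.le_sup' _ (Finset.mem_filter.mpr ⟨Finset.mem_univ _, hdom⟩)

lemma gamma_two {V : Type} [Fintype V] (k : ℕ) (hk : 2 ≤ k)
    (π : Fin (2*k-1) → LinearOrder V) (h : Fintype.card V = 2) :
    (k : ℚ) ≤ gammaW k π := by
  have hcard : (Finset.univ : Finset V).card = 2 := by rw [Finset.card_univ, h]
  obtain ⟨a, b, hab, huniv⟩ := Finset.card_eq_two.mp hcard
  have htot := weight_total k π hab
  rcases le_or_gt k (weightFn k π a b) with hw | hw
  · exact gamma_two_aux k hk π a b hab huniv.symm hw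
  · have hw' : k ≤ weightFn k π b a := by omega
    exact gamma_two_aux k hk π b a hab.symm (by rw [Finset.pair_comm b a]; exact huniv.symm) hw'

end Aux

end

theorem stmt16 (k : ℕ) (hk : 2 ≤ k) (q : ℚ) (hq2 : ∃ m : ℤ, 2*q = m)
    (hql : (k:ℚ)/2 ≤ q) (hqu : q ≤ (k:ℚ)-1) :
    (∃ (V : Type) (inst : Fintype V) (π : Fin (2*k-1) → LinearOrder V),
        @Fintype.card V inst = 3 ∧ @gammaW V inst k π = q) ∧
    (∀ (V : Type) (inst : Fintype V) (π : Fin (2*k-1) → LinearOrder V),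
        @gammaW V inst k π = q → 3 ≤ @Fintype.card V inst) ∧
    (∀ (V : Type) (inst : Fintype V) (π : Fin (2*k-1) → LinearOrder V),
        @Fintype.card V inst = 2 → (k:ℚ) ≤ @gammaW V inst k π) ∧
    (∀ (V : Type) (inst : Fintype V) (π : Fin (2*k-1) → LinearOrder V),
        @Fintype.card V inst = 1 → @gammaW V inst k π = 0) := by
  obtain ⟨m, hm⟩ := hq2
  have hk0 : (0:ℚ) < (k:ℚ) := by exact_mod_cast (by omega : 0 < k)
  have hmk : (k:ℤ) ≤ m := by
    have : (k:ℚ) ≤ (m:ℚ) := by rw [← hm]; linarith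
    exact_mod_cast this
  have hm2 : m ≤ 2*(k:ℤ) - 2 := by
    have : (m:ℚ) ≤ 2*(k:ℚ) - 2 := by rw [← hm]; linarith
    exact_mod_cast this
  set n : ℕ := m.toNat with hn
  have hnm : (n:ℤ) = m := Int.toNat_of_nonneg (by omega)
  have hkn : k ≤ n := by omega
  have hn2 : n ≤ 2*k - 2 := by omega
  set t : ℕ := n - k with ht
  have htk : t + 2 ≤ k := by omega
  have hqval : q = ((k:ℚ) + t)/2 := by
    have h1 : ((k + t : ℕ) : ℚ) = (n : ℚ) := by
      congr 1
      omega
    have h2 : (n:ℚ) = (m:ℚ) := by exact_mod_cast hnm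
    push_cast at h1
    rw [eq_div_iff (by norm_num : (2:ℚ) ≠ 0)]
    linarith [hm, h1, h2]
  refine ⟨⟨Fin 3, inferInstance, myπ t k, by simp, ?_⟩, ?_, ?_, ?_⟩
  · rw [gamma_myπ htk, hqval]
  · intro V inst π hγ
    by_contra hlt
    push_neg at hlt
    have hcard : Fintype.card V ≤ 2 := by omega
    rcases le_or_gt (Fintype.card V) 1 with h1 | h1
    · have := gamma_small k hk π h1
      rw [hγ] at this
      have : (k:ℚ)/2 ≤ 0 := this ▸ hql
      linarith
    · have h2 : Fintype.card V = 2 := by omega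
      have := gamma_two k hk π h2
      rw [hγ] at this
      linarith
  · intro V inst π h2
    exact gamma_two k hk π h2
  · intro V inst π h1
    exact gamma_small k hk π (by omega)
end
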